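/- Fix a ∈ (-1,1) and set c = (a-1)/2. Define g : [-1,1] → ℝ by g(x) = c for x < a, g(a) = c + 1/2, and g(x) = c + 1 for x > a. Then for every integer p ≥ 1, the error of the p-th partial Legendre sum of g at the point of discontinuity x = a satisfies the exact identity g(a) - S_p(g)(a) = (1/2) P_{p+1}(a) P_p(a). -/

import Mathlib

open MeasureTheory Real Polynomial Finset

/-- The `n`-th Legendre polynomial (via Rodrigues' formula), normalized so that `P n 1 = 1`. -/
noncomputable def legendre (n : ℕ) : Polynomial ℝ :=
  ((2 ^ n * n.factorial : ℝ)⁻¹) • derivative^[n] ((X ^ 2 - 1) ^ n)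

/-- The `k`-th Legendre coefficient of `f : [-1,1] → ℝ`:  `c_k(f) = (k + 1/2) ∫_{-1}^1 f t P_k t dt`. -/
noncomputable def legendreCoeff (f : ℝ → ℝ) (k : ℕ) : ℝ :=
  ((k : ℝ) + 1 / 2) * ∫ t in (-1 : ℝ)..1, f t * (legendre k).eval t

/-- The `p`-th partial Legendre sum of `f`:  `S_p(f)(x) = ∑_{k=0}^p c_k(f) P_k(x)`. -/
noncomputable def legendreSum (f : ℝ → ℝ) (p : ℕ) (x : ℝ) : ℝ :=
  ∑ k ∈ Finset.range (p + 1), legendreCoeff f k * (legendre k).eval x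

lemma legendre_zero : legendre 0 = 1 := by simp [legendre]

lemma legendre_one : legendre 1 = X := by
  simp only [legendre, pow_one, Nat.factorial_one, Nat.cast_one, mul_one,
    Function.iterate_one]
  rw [derivative_sub, derivative_one, derivative_X_pow]
  push_cast
  rw [smul_sub, smul_zero, sub_zero, pow_one, ← smul_eq_C_mul,
    smul_smul]
  norm_num

lemma iter_deriv_add (k : ℕ) (f g : ℝ[X]) :
    derivative^[k] (f + g) = derivative^[k] f + derivative^[k] g :=
  iterate_map_add derivative k f g

lemma iter_deriv_nsmul (k m : ℕ) (f : ℝ[X]) :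
    derivative^[k] (m • f) = m • derivative^[k] f := by
  induction k generalizing f with
  | zero => rfl
  | succ k ih =>
      rw [Function.iterate_succ_apply, derivative_smul, ih,
        ← Function.iterate_succ_apply]

-- L1
lemma iter_deriv_X_mul (n : ℕ) (f : ℝ[X]) :
    derivative^[n+1] (X * f) = X * derivative^[n+1] f + (n+1) • derivative^[n] f := by
  induction n generalizing f with
  | zero => simp [derivative_mul]; ring
  | succ n ih =>
      rw [Function.iterate_succ_apply, derivative_mul, derivative_X, one_mul,
        iter_deriv_add, ih (derivative f),
        ← Function.iterate_succ_apply derivative (n+1) f,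
        ← Function.iterate_succ_apply derivative n f,
        succ_nsmul (derivative^[n+1] f) (n+1)]
      abel

lemma iter_deriv_smul (k : ℕ) (r : ℝ) (f : ℝ[X]) :
    derivative^[k] (r • f) = r • derivative^[k] f := by
  induction k generalizing f with
  | zero => rfl
  | succ k ih =>
      rw [Function.iterate_succ_apply, derivative_smul, ih,
        ← Function.iterate_succ_apply]

-- real-scalar version of L1
lemma iter_deriv_X_mul' (n : ℕ) (f : ℝ[X]) :
    derivative^[n+1] (X * f)
      = X * derivative^[n+1] f + ((n:ℝ)+1) • derivative^[n] f := by
  have := iter_deriv_X_mul n f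
  rw [this, ← Nat.cast_smul_eq_nsmul ℝ]
  push_cast
  ring_nf

lemma deriv_sq_mul (f : ℝ[X]) :
    derivative ((X^2-1) * f) = (X^2-1) * derivative f + (2:ℝ) • (X * f) := by
  rw [derivative_mul, derivative_sub, derivative_one, derivative_X_pow]
  push_cast
  rw [pow_one, sub_zero, ← smul_eq_C_mul, smul_mul_assoc]
  ring_nf

-- L2
lemma iter_deriv_sq_mul (n : ℕ) (f : ℝ[X]) :
    derivative^[n+2] ((X^2-1) * f)
      = (X^2-1) * derivative^[n+2] f + (2*((n:ℝ)+2)) • (X * derivative^[n+1] f)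
        + (((n:ℝ)+2)*((n:ℝ)+1)) • derivative^[n] f := by
  induction n generalizing f with
  | zero =>
      rw [show (0:ℕ)+2 = 1+1 from rfl, Function.iterate_succ_apply, deriv_sq_mul,
        iter_deriv_add, iter_deriv_smul, iter_deriv_X_mul' 0 f]
      rw [Function.iterate_one, deriv_sq_mul (derivative f)]
      norm_num
      module
  | succ n ih =>
      rw [show n+1+2 = (n+2)+1 from rfl, Function.iterate_succ_apply, deriv_sq_mul,
        iter_deriv_add, iter_deriv_smul, ih (derivative f),
        iter_deriv_X_mul' (n+1) f,
        ← Function.iterate_succ_apply derivative (n+2) f,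
        ← Function.iterate_succ_apply derivative (n+1) f,
        ← Function.iterate_succ_apply derivative n f]
      push_cast
      module

noncomputable def U (n : ℕ) : ℝ[X] := ((X:ℝ[X])^2 - 1)^n

lemma deriv_U (m : ℕ) :
    derivative (U (m+1)) = (2*((m:ℝ)+1)) • (X * U m) := by
  rw [U, derivative_pow, derivative_sub, derivative_one, derivative_X_pow, U]
  push_cast
  rw [pow_one, sub_zero, ← smul_eq_C_mul, ← smul_eq_C_mul, smul_mul_assoc,
    mul_smul_comm, smul_smul]
  ring_nf

-- K1
lemma K1 (n : ℕ) :
    derivative^[n+2] (U (n+1))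
      = (2*((n:ℝ)+1)) • (X * derivative^[n+1] (U n) + ((n:ℝ)+1) • derivative^[n] (U n)) := by
  rw [show n+2 = (n+1)+1 from rfl, Function.iterate_succ_apply, deriv_U,
    iter_deriv_smul, iter_deriv_X_mul' n (U n)]

-- base identity: (X²-1) * D (U (m+1)) = 2(m+1) • (X * U (m+1))
lemma base_id (m : ℕ) :
    (X^2-1) * derivative (U (m+1)) = (2*((m:ℝ)+1)) • (X * U (m+1)) := by
  rw [deriv_U, U, U, mul_smul_comm]
  congr 1
  ring

-- K2
lemma K2 (m : ℕ) :
    (X^2-1) * derivative^[m+2] (U (m+1))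
      = (((m:ℝ)+1)*((m:ℝ)+2)) • derivative^[m] (U (m+1)) := by
  match m with
  | 0 =>
      have h2 : derivative^[2] (U 1) = C 2 := by
        rw [U, pow_one, show 2 = 1+1 from rfl, Function.iterate_succ_apply,
          derivative_sub, derivative_one, derivative_X_pow]
        norm_num
      rw [h2, Function.iterate_zero_apply, U, pow_one, mul_comm, ← smul_eq_C_mul]
      norm_num
  | (k+1) =>
      have h := congrArg (derivative^[k+2]) (base_id (k+1))
      rw [iter_deriv_sq_mul k (derivative (U (k+2))), iter_deriv_smul,
        iter_deriv_X_mul' (k+1) (U (k+2)),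
        ← Function.iterate_succ_apply derivative (k+2) (U (k+2)),
        ← Function.iterate_succ_apply derivative (k+1) (U (k+2)),
        ← Function.iterate_succ_apply derivative k (U (k+2))] at h
      push_cast at h ⊢
      linear_combination (norm := module) h

lemma legendre_eq (n : ℕ) :
    legendre n = ((2^n * n.factorial : ℝ))⁻¹ • derivative^[n] (U n) := rfl

lemma fac_ne (n : ℕ) : ((2^n * n.factorial : ℝ)) ≠ 0 := by
  positivity

-- (A)
lemma deriv_legendre_succ (n : ℕ) :
    derivative (legendre (n+1)) = X * derivative (legendre n) + ((n:ℝ)+1) • legendre n := by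
  rw [legendre_eq, legendre_eq, derivative_smul, derivative_smul,
    ← Function.iterate_succ_apply' derivative (n+1) (U (n+1)),
    ← Function.iterate_succ_apply' derivative n (U n), K1]
  simp only [Nat.succ_eq_add_one, smul_add, smul_smul, mul_smul_comm]
  have h := fac_ne n
  have h' := fac_ne (n+1)
  match_scalars <;>
  · rw [Nat.factorial_succ] at *
    push_cast at *
    field_simp
    ring

-- (C')
lemma legendre_rec (m : ℕ) :
    ((m:ℝ)+1) • legendre (m+1)
      = ((m:ℝ)+1) • (X * legendre m) + (X^2-1) * derivative (legendre m) := by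
  match m with
  | 0 => simp [legendre_zero, legendre_one]
  | (k+1) =>
      have h1 : derivative^[k+2] (U (k+2))
          = (2*((k:ℝ)+2)) • (X * derivative^[k+1] (U (k+1))
              + ((k:ℝ)+1) • derivative^[k] (U (k+1))) := by
        rw [Function.iterate_succ_apply, deriv_U (k+1), iter_deriv_smul,
          iter_deriv_X_mul' k (U (k+1))]
        push_cast
        ring_nf
      have h2 : (X^2-1) * derivative^[k+1+1] (U (k+1))
          = (((k:ℝ)+1)*((k:ℝ)+2)) • derivative^[k] (U (k+1)) := K2 k
      rw [legendre_eq, legendre_eq, h1, derivative_smul,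
        ← Function.iterate_succ_apply' derivative (k+1) (U (k+1))]
      simp only [Nat.succ_eq_add_one]
      simp only [mul_smul_comm]
      rw [h2]
      simp only [smul_add, smul_smul, mul_smul_comm]
      have h := fac_ne (k+1)
      have h' := fac_ne (k+2)
      match_scalars <;>
      · rw [Nat.factorial_succ (k+1)] at *
        push_cast at *
        field_simp
        ring

-- (B)
lemma deriv_legendre_pred (m : ℕ) :
    derivative (legendre m) = X * derivative (legendre (m+1)) - ((m:ℝ)+1) • legendre (m+1) := by
  have hA := deriv_legendre_succ m
  have hC := legendre_rec m
  rw [hA, hC]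
  simp only [smul_eq_C_mul]
  ring

lemma deriv_legendre_sub (n : ℕ) (hn : 1 ≤ n) :
    derivative (legendre (n+1) - legendre (n-1)) = (2*(n:ℝ)+1) • legendre n := by
  obtain ⟨m, rfl⟩ : ∃ m, n = m+1 := ⟨n-1, (Nat.succ_pred_eq_of_pos hn).symm⟩
  rw [Nat.add_sub_cancel, derivative_sub, deriv_legendre_succ (m+1),
    deriv_legendre_pred m]
  push_cast
  module

lemma U_eq (n : ℕ) : U n = (X - C 1)^n * (X - C (-1))^n := by
  rw [U, ← mul_pow]
  congr 1
  rw [C_neg, C_1]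
  ring

lemma legendre_eval_one (n : ℕ) : (legendre n).eval 1 = 1 := by
  rw [legendre_eq, U_eq, Polynomial.iterate_derivative_mul, eval_smul,
    eval_finset_sum, Finset.sum_eq_single 0 (fun k hkr hk => ?_) (by simp)]
  · rw [Nat.choose_zero_right, Nat.sub_zero, iterate_derivative_X_sub_pow_self,
      Function.iterate_zero_apply, one_smul]
    simp only [eval_mul, eval_natCast, eval_pow, eval_sub, eval_X, eval_C]
    have h := fac_ne n
    norm_num
    field_simp
  · have hk' : n - (n - k) = k := by have := Finset.mem_range.1 hkr; omega
    simp only [iterate_derivative_X_sub_pow, hk', smul_eq_mul, nsmul_eq_mul,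
      eval_mul, eval_pow, eval_sub, eval_X, eval_C, sub_self, zero_pow hk,
      mul_zero, zero_mul]

lemma legendre_eval_neg_one (n : ℕ) : (legendre n).eval (-1) = (-1)^n := by
  rw [legendre_eq, U_eq, Polynomial.iterate_derivative_mul, eval_smul,
    eval_finset_sum, Finset.sum_eq_single n (fun k hkr hk => ?_) (by simp)]
  · rw [Nat.choose_self, Nat.sub_self, iterate_derivative_X_sub_pow_self,
      Function.iterate_zero_apply, one_smul]
    simp only [eval_mul, eval_natCast, eval_pow, eval_sub, eval_X, eval_C]
    rw [show (-1:ℝ) - 1 = -2 from by norm_num, show (-2:ℝ) = -(2:ℝ) from by norm_num,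
      neg_pow, smul_eq_mul]
    have h := fac_ne n
    field_simp
  · have hk' : n - k ≠ 0 := by have := Finset.mem_range.1 hkr; omega
    simp only [iterate_derivative_X_sub_pow, smul_eq_mul, nsmul_eq_mul,
      eval_mul, eval_pow, eval_sub, eval_X, eval_C, neg_sub_neg, sub_self,
      zero_pow hk', mul_zero, zero_mul]

open MeasureTheory intervalIntegral in
lemma integral_deriv_poly (Q : ℝ[X]) (x y : ℝ) :
    ∫ t in x..y, (derivative Q).eval t = Q.eval y - Q.eval x := by
  apply intervalIntegral.integral_eq_sub_of_hasDerivAt (fun t _ => Q.hasDerivAt t)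
  exact ((derivative Q).continuous_aeval).intervalIntegrable x y

lemma integral_legendre (n : ℕ) (hn : 1 ≤ n) (x y : ℝ) :
    ∫ t in x..y, (legendre n).eval t
      = (2*(n:ℝ)+1)⁻¹ * ((legendre (n+1) - legendre (n-1)).eval y
          - (legendre (n+1) - legendre (n-1)).eval x) := by
  have hne : (2*(n:ℝ)+1) ≠ 0 := by positivity
  have h : ∀ t : ℝ, (legendre n).eval t
      = (2*(n:ℝ)+1)⁻¹ * (derivative (legendre (n+1) - legendre (n-1))).eval t := by
    intro t
    rw [deriv_legendre_sub n hn, eval_smul, smul_eq_mul]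
    field_simp
  simp_rw [h]
  rw [intervalIntegral.integral_const_mul, integral_deriv_poly]

lemma R_eval_one (m : ℕ) : (legendre (m+1+1) - legendre (m+1-1)).eval 1 = 0 := by
  simp [legendre_eval_one]

lemma R_eval_neg_one (m : ℕ) : (legendre (m+1+1) - legendre (m+1-1)).eval (-1) = 0 := by
  simp only [eval_sub, legendre_eval_neg_one, Nat.add_sub_cancel]
  ring

open MeasureTheory in
lemma step_integral (a c : ℝ) (ha1 : (-1:ℝ) ≤ a) (ha2 : a ≤ 1) (g : ℝ → ℝ)
    (hg₁ : ∀ x : ℝ, x < a → g x = c) (hg₃ : ∀ x : ℝ, a < x → g x = c + 1) (P : ℝ[X]) :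
    ∫ t in (-1:ℝ)..1, g t * P.eval t
      = c * (∫ t in (-1:ℝ)..1, P.eval t) + ∫ t in a..1, P.eval t := by
  have hcont1 : Continuous fun t : ℝ => c * P.eval t :=
    continuous_const.mul P.continuous_aeval
  have hcont2 : Continuous fun t : ℝ => (c+1) * P.eval t :=
    continuous_const.mul P.continuous_aeval
  have hane : ∀ᵐ t : ℝ ∂volume, t ≠ a := by
    rw [ae_iff]
    simp only [ne_eq, not_not, Set.setOf_eq_eq_singleton]
    exact Real.volume_singleton
  have hmem1 : ∀ᵐ (x:ℝ) ∂volume, x ∈ Set.uIoc (-1:ℝ) a → g x * P.eval x = c * P.eval x := by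
    filter_upwards [hane] with t ht htm
    rw [Set.uIoc_of_le ha1] at htm
    rw [hg₁ t (lt_of_le_of_ne htm.2 ht)]
  have hmem2 : ∀ᵐ (x:ℝ) ∂volume, x ∈ Set.uIoc a (1:ℝ) → g x * P.eval x = (c+1) * P.eval x := by
    filter_upwards with t htm
    rw [Set.uIoc_of_le ha2] at htm
    rw [hg₃ t htm.1]
  have hI1 : IntervalIntegrable (fun t => g t * P.eval t) volume (-1) a :=
    (hcont1.intervalIntegrable _ _).congr_ae
      (((ae_restrict_iff' measurableSet_uIoc).2 hmem1).mono fun t ht => ht.symm)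
  have hI2 : IntervalIntegrable (fun t => g t * P.eval t) volume a 1 :=
    (hcont2.intervalIntegrable _ _).congr_ae
      (((ae_restrict_iff' measurableSet_uIoc).2 hmem2).mono fun t ht => ht.symm)
  rw [← intervalIntegral.integral_add_adjacent_intervals hI1 hI2,
    intervalIntegral.integral_congr_ae hmem1, intervalIntegral.integral_congr_ae hmem2,
    intervalIntegral.integral_const_mul, intervalIntegral.integral_const_mul,
    ← intervalIntegral.integral_add_adjacent_intervals
      (P.continuous.intervalIntegrable (-1) a)
      (P.continuous.intervalIntegrable a 1)]
  ring

/-- exact identity for the error at the point of discontinuity. -/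
theorem stmt_5 (a : ℝ) (ha : a ∈ Set.Ioo (-1 : ℝ) 1) (c : ℝ) (hc : c = (a - 1) / 2)
    (g : ℝ → ℝ)
    (hg₁ : ∀ x : ℝ, x < a → g x = c)
    (hg₂ : g a = c + 1 / 2)
    (hg₃ : ∀ x : ℝ, a < x → g x = c + 1)
    (p : ℕ) (hp : 1 ≤ p) :
    g a - legendreSum g p a = (1 / 2) * (legendre (p + 1)).eval a * (legendre p).eval a := by
  have ha1 : (-1:ℝ) ≤ a := le_of_lt ha.1
  have ha2 : a ≤ 1 := le_of_lt ha.2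
  -- coefficient 0 vanishes
  have c0 : legendreCoeff g 0 = 0 := by
    rw [legendreCoeff, step_integral a c ha1 ha2 g hg₁ hg₃ (legendre 0)]
    simp only [legendre_zero, eval_one, intervalIntegral.integral_const, smul_eq_mul,
      mul_one]
    rw [hc]
    norm_num
  -- coefficients k ≥ 1
  have ck : ∀ m : ℕ, legendreCoeff g (m+1)
      = ((legendre m).eval a - (legendre (m+2)).eval a) / 2 := by
    intro m
    have hne : (2*((m:ℝ)+1)+1) ≠ 0 := by positivity
    rw [legendreCoeff, step_integral a c ha1 ha2 g hg₁ hg₃ (legendre (m+1)),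
      integral_legendre (m+1) (Nat.le_add_left 1 m) (-1) 1,
      integral_legendre (m+1) (Nat.le_add_left 1 m) a 1,
      R_eval_one m, R_eval_neg_one m]
    simp only [Nat.add_sub_cancel, eval_sub]
    push_cast
    rw [show m+1+1 = m+2 from rfl]
    field_simp
    ring
  -- telescoping sum
  set F : ℕ → ℝ := fun i => (legendre i).eval a * (legendre (i+1)).eval a / 2 with hF
  have hsum : legendreSum g p a = F 0 - F p := by
    rw [legendreSum, Finset.sum_range_succ']
    rw [c0, zero_mul, add_zero]
    rw [Finset.sum_congr rfl (fun i _ => ?_), Finset.sum_range_sub' F p]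
    rw [ck i, hF]
    rw [show i+1+1 = i+2 from rfl]
    ring
  rw [hsum, hF]
  simp only [zero_add, legendre_zero, legendre_one, eval_one, eval_X]
  rw [hg₂, hc]
  ring
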